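/- Let G be a semilinear* graph of complexity (t, u). Then there exist graphs G_1, …, G_u on the vertex set V(G), each isomorphic to a quasi-comparability graph of complexity t, such that G = G_1 ∪ ⋯ ∪ G_u (i.e., E(G) = E(G_1) ∪ ⋯ ∪ E(G_u)). -/

import Mathlib

/-- `f : ℝ^d × ℝ^d → ℝ` is linear (affine). -/
def IsLinearPair {d : ℕ} (f : (Fin d → ℝ) → (Fin d → ℝ) → ℝ) : Prop :=
  ∃ (a b : Fin d → ℝ) (c : ℝ), ∀ x y, f x y = c + (∑ i, a i * x i) + (∑ i, b i * y i)

/-- `G` is a semilinear* graph of complexity `(t,u)`. -/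
def IsSemilinearStar {V : Type} (G : SimpleGraph V) (t u : ℕ) : Prop :=
  ∃ d : ℕ, 0 < d ∧
    ∃ v : V → Fin d → ℝ, Function.Injective v ∧
      ∃ f : Fin u → Fin t → (Fin d → ℝ) → (Fin d → ℝ) → ℝ,
        (∀ i j, IsLinearPair (f i j)) ∧
        ∀ x y : V, x ≠ y →
          (G.Adj x y ↔ ∃ i : Fin u, ∀ j : Fin t, f i j (v x) (v y) < 0)

/-- The coordinate-wise strict partial order on `ℝ^t`. -/
def PrecLT {t : ℕ} (x y : Fin t → ℝ) : Prop := ∀ i, x i < y i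

/-- `G` is (isomorphic to) a quasi-comparability graph of complexity `t`. -/
def IsQuasiComp {V : Type} (G : SimpleGraph V) (t : ℕ) : Prop :=
  ∃ v : V → (Fin t → ℝ) × (Fin t → ℝ), Function.Injective v ∧
    ∀ x y : V, x ≠ y →
      (G.Adj x y ↔ PrecLT (v x).1 (v y).2 ∨ PrecLT (v y).1 (v x).2)

/-- Every semilinear* graph of complexity `(t,u)` is the union of `u` graphs, each isomorphic to
a quasi-comparability graph of complexity `t`. -/
theorem stmt16 {V : Type} [Fintype V] (G : SimpleGraph V) (t u : ℕ) (ht : 0 < t) (hu : 0 < u)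
    (h : IsSemilinearStar G t u) :
    ∃ Gs : Fin u → SimpleGraph V,
      (∀ i, IsQuasiComp (Gs i) t) ∧ ∀ x y : V, G.Adj x y ↔ ∃ i, (Gs i).Adj x y := by
  obtain ⟨d, hd, v, hv, f, hlin, hadj⟩ := h
  choose a b c hf using hlin
  -- an injective map `g : V → (0,1)`
  have hgex : ∃ g : V → ℝ, Function.Injective g ∧ ∀ x, 0 < g x ∧ g x < 1 := by
    refine ⟨fun x => ((Fintype.equivFin V x : ℕ) + 1) / (Fintype.card V + 1), ?_, ?_⟩
    · intro x y hxy
      have hc : ((Fintype.card V : ℝ) + 1) ≠ 0 := by positivity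
      rw [div_eq_div_iff hc hc] at hxy
      have h1 := mul_right_cancel₀ hc hxy
      have h2 : (Fintype.equivFin V x : ℕ) = (Fintype.equivFin V y : ℕ) := by
        have h3 : ((Fintype.equivFin V x : ℕ) : ℝ) = ((Fintype.equivFin V y : ℕ) : ℝ) := by
          linarith
        exact_mod_cast h3
      exact (Fintype.equivFin V).injective (Fin.ext h2)
    · intro x
      constructor
      · positivity
      · rw [div_lt_one (by positivity)]
        have : (Fintype.equivFin V x : ℕ) < Fintype.card V := (Fintype.equivFin V x).2
        have : ((Fintype.equivFin V x : ℕ) : ℝ) < (Fintype.card V : ℝ) := by exact_mod_cast this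
        linarith
  obtain ⟨g, hginj, hg⟩ := hgex
  -- a positive margin δ below all strictly negative values of f
  set F : Finset ℝ := insert 1 (((Finset.univ : Finset (V × V × Fin u × Fin t)).image
    (fun p => -(f p.2.2.1 p.2.2.2 (v p.1) (v p.2.1)))).filter (fun r => 0 < r)) with hF
  have hFne : F.Nonempty := ⟨1, Finset.mem_insert_self _ _⟩
  set δ : ℝ := F.min' hFne with hδ
  have hδpos : 0 < δ := by
    have hall : ∀ r ∈ F, 0 < r := by
      intro r hr
      rw [hF] at hr
      rcases Finset.mem_insert.mp hr with h1 | h2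
      · rw [h1]; norm_num
      · exact (Finset.mem_filter.mp h2).2
    exact hall _ (F.min'_mem hFne)
  have hδle : ∀ (x y : V) (i : Fin u) (j : Fin t),
      f i j (v x) (v y) < 0 → δ ≤ -(f i j (v x) (v y)) := by
    intro x y i j hneg
    apply F.min'_le
    rw [hF]
    apply Finset.mem_insert_of_mem
    refine Finset.mem_filter.mpr ⟨?_, by linarith⟩
    exact Finset.mem_image.mpr ⟨(x, y, i, j), Finset.mem_univ _, rfl⟩
  -- fix the first coordinate
  set j0 : Fin t := ⟨0, ht⟩ with hj0
  -- choose ε ∈ (0, δ) avoiding finitely many bad values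
  have hεex : ∃ ε : ℝ, 0 < ε ∧ ε < δ ∧ ∀ (i : Fin u) (x y : V), x ≠ y →
      (∑ k, a i j0 k * v x k) + ε * g x ≠ (∑ k, a i j0 k * v y k) + ε * g y := by
    set B : Finset ℝ := (Finset.univ : Finset (Fin u × V × V)).image
      (fun p => ((∑ k, a p.1 j0 k * v p.2.2 k) - (∑ k, a p.1 j0 k * v p.2.1 k)) /
        (g p.2.1 - g p.2.2)) with hB
    obtain ⟨ε, hIoo, hBmem⟩ := ((Set.Ioo_infinite hδpos).diff B.finite_toSet).nonempty
    refine ⟨ε, hIoo.1, hIoo.2, ?_⟩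
    intro i x y hxy heq
    apply hBmem
    refine Finset.mem_coe.mpr (Finset.mem_image.mpr ⟨(i, x, y), Finset.mem_univ _, ?_⟩)
    have hgne : g x - g y ≠ 0 := sub_ne_zero.mpr fun hh => hxy (hginj hh)
    rw [div_eq_iff hgne]
    linear_combination -heq
  obtain ⟨ε, hεpos, hεδ, hεinj⟩ := hεex
  -- the embedding for each i
  set w : Fin u → V → (Fin t → ℝ) × (Fin t → ℝ) := fun i x =>
    (fun j => (∑ k, a i j k * v x k) + ε * g x,
     fun j => -(c i j) - ∑ k, b i j k * v x k) with hw
  have key : ∀ (i : Fin u) (x y : V), PrecLT ((w i x).1) ((w i y).2) ↔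
      ∀ j, f i j (v x) (v y) < 0 := by
    intro i x y
    constructor
    · intro hp j
      have h1 := hp j
      rw [hw] at h1
      simp only at h1
      have h2 := hf i j (v x) (v y)
      have h3 : 0 < ε * g x := mul_pos hεpos (hg x).1
      linarith
    · intro hn j
      have h1 := hn j
      have h2 := hf i j (v x) (v y)
      have h3 := hδle x y i j h1
      have h4 : ε * g x < ε := mul_lt_of_lt_one_right hεpos (hg x).2
      rw [hw]
      simp only
      linarith
  refine ⟨fun i =>
    { Adj := fun x y => x ≠ y ∧ ((∀ j, f i j (v x) (v y) < 0) ∨ (∀ j, f i j (v y) (v x) < 0)),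
      symm := ⟨fun x y ⟨h1, h2⟩ => ⟨h1.symm, h2.symm⟩⟩,
      loopless := ⟨fun x hx => hx.1 rfl⟩ }, ?_, ?_⟩
  · intro i
    refine ⟨w i, ?_, ?_⟩
    · intro x y hxy
      by_contra hne
      have h1 : (w i x).1 j0 = (w i y).1 j0 := by rw [hxy]
      rw [hw] at h1
      simp only at h1
      exact hεinj i x y hne h1
    · intro x y hxy
      simp only [ne_eq]
      constructor
      · rintro ⟨-, h2 | h2⟩
        · exact Or.inl ((key i x y).mpr h2)
        · exact Or.inr ((key i y x).mpr h2)
      · rintro (h2 | h2)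
        · exact ⟨hxy, Or.inl ((key i x y).mp h2)⟩
        · exact ⟨hxy, Or.inr ((key i y x).mp h2)⟩
  · intro x y
    constructor
    · intro hGxy
      have hxy : x ≠ y := hGxy.ne
      obtain ⟨i, hi⟩ := (hadj x y hxy).mp hGxy
      exact ⟨i, hxy, Or.inl hi⟩
    · rintro ⟨i, hxy, hi | hi⟩
      · exact (hadj x y hxy).mpr ⟨i, hi⟩
      · exact ((hadj y x hxy.symm).mpr ⟨i, hi⟩).symm
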